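/- Let q = p^m be an odd prime power with q ≡ 1 (mod 4). Then the action of SL(2,F_q) on the set of 3-element subsets of the projective line ℙ¹(F_q) has exactly two orbits, and both orbits have size (1/2)·binom(q+1, 3). -/

import Mathlib

open scoped Pointwise MatrixGroups

noncomputable section

/-- The projective line over `K`. -/
abbrev Proj (K : Type*) [Field K] := Projectivization K (Fin 2 → K)

variable {K : Type*} [Field K]

lemma GLmulVecLin_injective (g : GL (Fin 2) K) :
    Function.Injective ((g : Matrix (Fin 2) (Fin 2) K).mulVecLin) := by
  intro u v huv
  have h := congrArg ((((g⁻¹ : GL (Fin 2) K) : Matrix (Fin 2) (Fin 2) K)).mulVecLin) huv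
  simp only [Matrix.mulVecLin_apply, Matrix.mulVec_mulVec] at h
  rw [show ((g⁻¹ : GL (Fin 2) K) : Matrix (Fin 2) (Fin 2) K) * (g : Matrix (Fin 2) (Fin 2) K) = 1
    from g.inv_mul, Matrix.one_mulVec, Matrix.one_mulVec] at h
  exact h

lemma GLmulVec_ne_zero (g : GL (Fin 2) K) {v : Fin 2 → K} (hv : v ≠ 0) :
    (g : Matrix (Fin 2) (Fin 2) K).mulVec v ≠ 0 := by
  intro h
  apply hv
  have : ((g : Matrix (Fin 2) (Fin 2) K)).mulVecLin v =
      ((g : Matrix (Fin 2) (Fin 2) K)).mulVecLin 0 := by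
    simpa [Matrix.mulVecLin_apply] using h
  simpa using GLmulVecLin_injective g this

/-- The action of `GL(2,K)` on the projective line by matrix-vector multiplication on
representatives. -/
instance GLProjAction : MulAction (GL (Fin 2) K) (Proj K) where
  smul g x := Projectivization.map ((g : Matrix (Fin 2) (Fin 2) K).mulVecLin)
    (GLmulVecLin_injective g) x
  one_smul x := by
    induction x using Projectivization.ind with
    | h v hv =>
      show Projectivization.map _ _ _ = _
      simp [Projectivization.map_mk]
  mul_smul g h x := by
    induction x using Projectivization.ind with
    | h v hv =>
      show Projectivization.map _ _ _ =
        Projectivization.map _ _ (Projectivization.map _ _ _)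
      simp [Projectivization.map_mk, Matrix.mulVecLin_apply, Matrix.mulVec_mulVec,
        Units.val_mul]

lemma GL_smul_mk (g : GL (Fin 2) K) (v : Fin 2 → K) (hv : v ≠ 0) :
    g • Projectivization.mk K v hv =
      Projectivization.mk K ((g : Matrix (Fin 2) (Fin 2) K).mulVec v)
        (GLmulVec_ne_zero g hv) := by
  show Projectivization.map _ _ _ = _
  simp [Projectivization.map_mk, Matrix.mulVecLin_apply]

/-- The action of `SL(2,K)` on the projective line. -/
instance SLProjAction : MulAction (Matrix.SpecialLinearGroup (Fin 2) K) (Proj K) :=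
  MulAction.compHom _ (Matrix.SpecialLinearGroup.toGL)

end

noncomputable section
variable {K : Type*} [Field K]

lemma center_smul_eq (c : GL (Fin 2) K) (hc : c ∈ Subgroup.center (GL (Fin 2) K))
    (x : Proj K) : c • x = x := by
  have hcomm : ∀ t : Matrix.TransvectionStruct (Fin 2) K,
      Commute t.toMatrix (c : Matrix (Fin 2) (Fin 2) K) := by
    intro t
    let u : GL (Fin 2) K := ⟨t.toMatrix, t.inv.toMatrix, t.mul_inv, t.inv_mul⟩
    have h := Subgroup.mem_center_iff.mp hc u
    have := congrArg Units.val h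
    simpa [u, Commute, SemiconjBy] using this
  obtain ⟨r, hr⟩ := Matrix.mem_range_scalar_of_commute_transvectionStruct hcomm
  have hr0 : r ≠ 0 := by
    intro h0
    have hne : (![1, 0] : Fin 2 → K) ≠ 0 := by
      intro h
      have := congrFun h 0
      simp at this
    have := GLmulVec_ne_zero c hne
    rw [← hr, h0] at this
    rw [show (0 : K) = (0 : K) from rfl] at this
    apply this
    funext i
    simp [Matrix.mulVec_diagonal]
  induction x using Projectivization.ind with
  | h v hv =>
    rw [GL_smul_mk]
    rw [Projectivization.mk_eq_mk_iff]
    refine ⟨Units.mk0 r hr0, ?_⟩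
    rw [← hr]
    funext i
    simp [Matrix.mulVec_diagonal]

end

noncomputable section

/-- The projective general linear group `PGL(2,K) = GL(2,K)/Z(GL(2,K))`. -/
abbrev PGL2 (K : Type*) [Field K] : Type _ :=
  GL (Fin 2) K ⧸ Subgroup.center (GL (Fin 2) K)

variable {K : Type*} [Field K]

/-- The action of `GL(2,K)` on the projective line descends to `PGL(2,K)`. -/
instance PGLProjSMul : SMul (PGL2 K) (Proj K) :=
  ⟨fun g x => Quotient.liftOn' g (fun a => a • x) (by
    intro a b hab
    rw [QuotientGroup.leftRel_apply] at hab
    show a • x = b • x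
    have hb : b = a * (a⁻¹ * b) := by group
    rw [hb, mul_smul, center_smul_eq _ hab])⟩

instance PGLProjAction : MulAction (PGL2 K) (Proj K) where
  one_smul x := center_smul_eq 1 (Subgroup.one_mem _) x
  mul_smul g h x := by
    induction g using Quotient.inductionOn' with
    | h a =>
      induction h using Quotient.inductionOn' with
      | h b => exact mul_smul a b x

lemma PGL2_smul_mk' (a : GL (Fin 2) K) (x : Proj K) :
    (QuotientGroup.mk a : PGL2 K) • x = a • x := rfl

/-- The natural homomorphism `SL(2,K) → PGL(2,K)`. -/
def SLtoPGL2 (K : Type*) [Field K] : Matrix.SpecialLinearGroup (Fin 2) K →* PGL2 K :=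
  (QuotientGroup.mk' (Subgroup.center (GL (Fin 2) K))).comp Matrix.SpecialLinearGroup.toGL

/-- `PSL(2,K)`, realized as the image of `SL(2,K)` in `PGL(2,K)`. -/
def PSL2 (K : Type*) [Field K] : Subgroup (PGL2 K) := (SLtoPGL2 K).range

/-- A subset `F` of a group `G` acting on the projective line over `K` is *intersecting for the
action on `k`-element subsets* if any two of its elements agree on some `k`-element subset of
the projective line. -/
def IntersectingOnSubsets (G : Type*) [Group G] (K : Type*) [Field K]
    [MulAction G (Proj K)] (k : ℕ) (F : Set G) : Prop :=
  ∀ g ∈ F, ∀ h ∈ F, ∃ S : Set (Proj K), S.ncard = k ∧ g • S = h • S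

end

noncomputable section AuxLemmas
open scoped Pointwise
variable {K : Type*} [Field K]

lemma vne0 {a b : K} (h : a ≠ 0 ∨ b ≠ 0) : (![a,b] : Fin 2 → K) ≠ 0 := by
  intro hh
  rcases h with h | h
  · exact h (by simpa using congrFun hh 0)
  · exact h (by simpa using congrFun hh 1)

lemma mk_eq_mk_iff_det (u v : Fin 2 → K) (hu : u ≠ 0) (hv : v ≠ 0) :
    Projectivization.mk K u hu = Projectivization.mk K v hv ↔ u 0 * v 1 - u 1 * v 0 = 0 := by
  rw [Projectivization.mk_eq_mk_iff']
  constructor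
  · rintro ⟨a, ha⟩
    have h0 : u 0 = a * v 0 := by rw [← ha]; simp
    have h1 : u 1 = a * v 1 := by rw [← ha]; simp
    rw [h0, h1]; ring
  · intro h
    rcases (by by_contra hc; push_neg at hc; apply hv; funext i; fin_cases i <;> simp [hc.1, hc.2] :
        v 0 ≠ 0 ∨ v 1 ≠ 0) with h0 | h1
    · refine ⟨u 0 / v 0, ?_⟩
      funext i; fin_cases i
      · show u 0 / v 0 * v 0 = u 0
        exact div_mul_cancel₀ _ h0
      · show u 0 / v 0 * v 1 = u 1
        rw [div_mul_eq_mul_div, div_eq_iff h0]; linear_combination h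
    · refine ⟨u 1 / v 1, ?_⟩
      funext i; fin_cases i
      · show u 1 / v 1 * v 0 = u 0
        rw [div_mul_eq_mul_div, div_eq_iff h1]; linear_combination -h
      · show u 1 / v 1 * v 1 = u 1
        exact div_mul_cancel₀ _ h1

/-- The point `[1:0]` (infinity). -/
def P0 (K : Type*) [Field K] : Proj K := Projectivization.mk K ![1,0] (vne0 (Or.inl one_ne_zero))
/-- The point `[0:1]` (zero). -/
def P1 (K : Type*) [Field K] : Proj K := Projectivization.mk K ![0,1] (vne0 (Or.inr one_ne_zero))
/-- The point `[1:1]` (one). -/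
def P2 (K : Type*) [Field K] : Proj K := Projectivization.mk K ![1,1] (vne0 (Or.inl one_ne_zero))

/-- The base triple `{∞, 0, 1}`. -/
def base (K : Type*) [Field K] : Set (Proj K) := {P0 K, P1 K, P2 K}

lemma P0_ne_P1 : P0 K ≠ P1 K := by
  rw [P0, P1, Ne, mk_eq_mk_iff_det]; norm_num

lemma P0_ne_P2 : P0 K ≠ P2 K := by
  rw [P0, P2, Ne, mk_eq_mk_iff_det]; norm_num

lemma P1_ne_P2 : P1 K ≠ P2 K := by
  rw [P1, P2, Ne, mk_eq_mk_iff_det]; norm_num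

/-- Build a `GL₂` element from four entries with nonzero determinant. -/
def glmk (a b c d : K) (h : a * d - b * c ≠ 0) : GL (Fin 2) K :=
  Matrix.GeneralLinearGroup.mkOfDetNeZero (Matrix.of ![![a,b],![c,d]])
    (by rw [Matrix.det_fin_two_of]; exact h)

lemma glmk_coe (a b c d : K) (h : a * d - b * c ≠ 0) :
    ((glmk a b c d h : GL (Fin 2) K) : Matrix (Fin 2) (Fin 2) K) = Matrix.of ![![a,b],![c,d]] :=
  rfl

lemma glmk_det (a b c d : K) (h : a * d - b * c ≠ 0) :
    Matrix.det ((glmk a b c d h : GL (Fin 2) K) : Matrix (Fin 2) (Fin 2) K) = a * d - b * c := by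
  rw [glmk_coe, Matrix.det_fin_two_of]

lemma glmk_mulVec (a b c d : K) (h : a * d - b * c ≠ 0) (u : Fin 2 → K) :
    ((glmk a b c d h : GL (Fin 2) K) : Matrix (Fin 2) (Fin 2) K).mulVec u =
      ![a * u 0 + b * u 1, c * u 0 + d * u 1] := by
  funext i
  rw [glmk_coe]
  fin_cases i
  · show (Matrix.of ![![a,b],![c,d]]).mulVec u 0 = a * u 0 + b * u 1
    simp [Matrix.mulVec, dotProduct, Fin.sum_univ_two]
  · show (Matrix.of ![![a,b],![c,d]]).mulVec u 1 = c * u 0 + d * u 1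
    simp [Matrix.mulVec, dotProduct, Fin.sum_univ_two]

lemma glmk_smul_eq {a b c d : K} (h : a * d - b * c ≠ 0) (u v : Fin 2 → K) (hu : u ≠ 0)
    (hv : v ≠ 0) (key : (a * u 0 + b * u 1) * v 1 - (c * u 0 + d * u 1) * v 0 = 0) :
    glmk a b c d h • Projectivization.mk K u hu = Projectivization.mk K v hv := by
  rw [GL_smul_mk, mk_eq_mk_iff_det, glmk_mulVec]
  simpa using key

end AuxLemmas


noncomputable section AuxLemmas2
open scoped Pointwise
variable {K : Type*} [Field K]

lemma mulVec_comp (M : Matrix (Fin 2) (Fin 2) K) (v : Fin 2 → K) (i : Fin 2) :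
    M.mulVec v i = M i 0 * v 0 + M i 1 * v 1 := by
  simp [Matrix.mulVec, dotProduct, Fin.sum_univ_two]

lemma glmk_smul_P0 {a b c d : K} (h : a * d - b * c ≠ 0) (v : Fin 2 → K) (hv : v ≠ 0)
    (key : a * v 1 - c * v 0 = 0) :
    glmk a b c d h • P0 K = Projectivization.mk K v hv := by
  rw [P0]; apply glmk_smul_eq; simp; linear_combination key

lemma glmk_smul_P1 {a b c d : K} (h : a * d - b * c ≠ 0) (v : Fin 2 → K) (hv : v ≠ 0)
    (key : b * v 1 - d * v 0 = 0) :
    glmk a b c d h • P1 K = Projectivization.mk K v hv := by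
  rw [P1]; apply glmk_smul_eq; simp; linear_combination key

lemma glmk_smul_P2 {a b c d : K} (h : a * d - b * c ≠ 0) (v : Fin 2 → K) (hv : v ≠ 0)
    (key : (a + b) * v 1 - (c + d) * v 0 = 0) :
    glmk a b c d h • P2 K = Projectivization.mk K v hv := by
  rw [P2]; apply glmk_smul_eq; simp; linear_combination key

/-- Three-transitivity (existence part). -/
lemma exists_gl_map (x y z : Proj K) (hxy : x ≠ y) (hxz : x ≠ z) (hyz : y ≠ z) :
    ∃ g : GL (Fin 2) K, g • P0 K = x ∧ g • P1 K = y ∧ g • P2 K = z := by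
  induction x using Projectivization.ind with | h u hu =>
  induction y using Projectivization.ind with | h v hv =>
  induction z using Projectivization.ind with | h w hw =>
  have hD : u 0 * v 1 - u 1 * v 0 ≠ 0 := fun hD =>
    hxy ((mk_eq_mk_iff_det u v hu hv).mpr hD)
  set D : K := u 0 * v 1 - u 1 * v 0 with hDdef
  have ha : (w 0 * v 1 - w 1 * v 0) / D ≠ 0 := by
    apply div_ne_zero _ hD
    exact fun hh => hyz ((mk_eq_mk_iff_det w v hw hv).mpr hh).symm
  have hb : (u 0 * w 1 - u 1 * w 0) / D ≠ 0 := by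
    apply div_ne_zero _ hD
    exact fun hh => hxz ((mk_eq_mk_iff_det u w hu hw).mpr hh)
  set a : K := (w 0 * v 1 - w 1 * v 0) / D with hadef
  set b : K := (u 0 * w 1 - u 1 * w 0) / D with hbdef
  have hdet : (a * u 0) * (b * v 1) - (b * v 0) * (a * u 1) ≠ 0 := by
    have : (a * u 0) * (b * v 1) - (b * v 0) * (a * u 1) = a * b * D := by
      rw [hDdef]; ring
    rw [this]
    exact mul_ne_zero (mul_ne_zero ha hb) hD
  refine ⟨glmk (a * u 0) (b * v 0) (a * u 1) (b * v 1) hdet, ?_, ?_, ?_⟩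
  · apply glmk_smul_P0
    ring
  · apply glmk_smul_P1
    ring
  · apply glmk_smul_P2
    rw [hadef, hbdef, hDdef]
    field_simp
    ring
end AuxLemmas2


noncomputable section AuxLemmas3
open scoped Pointwise
set_option synthInstance.maxHeartbeats 1000000
variable {K : Type*} [Field K]

lemma pointwise_stab_isSquare (g : GL (Fin 2) K) (h0 : g • P0 K = P0 K) (h1 : g • P1 K = P1 K)
    (h2 : g • P2 K = P2 K) : IsSquare (Matrix.det (g : Matrix (Fin 2) (Fin 2) K)) := by
  rw [P0, GL_smul_mk, mk_eq_mk_iff_det] at h0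
  rw [P1, GL_smul_mk, mk_eq_mk_iff_det] at h1
  rw [P2, GL_smul_mk, mk_eq_mk_iff_det] at h2
  simp only [mulVec_comp] at h0 h1 h2
  simp at h0 h1 h2
  have e : (g : Matrix (Fin 2) (Fin 2) K) 1 1 = (g : Matrix (Fin 2) (Fin 2) K) 0 0 := by
    linear_combination h1 - h0 - h2
  refine ⟨(g : Matrix (Fin 2) (Fin 2) K) 0 0, ?_⟩
  rw [Matrix.det_fin_two, h0, h1, e]
  ring

lemma smul_helper (g s : GL (Fin 2) K)
    (hs : IsSquare (Matrix.det (s : Matrix (Fin 2) (Fin 2) K)))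
    (h0 : g • P0 K = s • P0 K) (h1 : g • P1 K = s • P1 K) (h2 : g • P2 K = s • P2 K) :
    IsSquare (Matrix.det (g : Matrix (Fin 2) (Fin 2) K)) := by
  have e0 : (s⁻¹ * g) • P0 K = P0 K := by rw [mul_smul, h0, inv_smul_smul]
  have e1 : (s⁻¹ * g) • P1 K = P1 K := by rw [mul_smul, h1, inv_smul_smul]
  have e2 : (s⁻¹ * g) • P2 K = P2 K := by rw [mul_smul, h2, inv_smul_smul]
  have hsq := pointwise_stab_isSquare (s⁻¹ * g) e0 e1 e2
  have key : Matrix.det ((s : Matrix (Fin 2) (Fin 2) K)) *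
      Matrix.det ((↑(s⁻¹ * g) : Matrix (Fin 2) (Fin 2) K)) =
      Matrix.det ((g : Matrix (Fin 2) (Fin 2) K)) := by
    rw [← Matrix.det_mul, ← Units.val_mul]
    congr 2
    group
  rw [← key]
  exact hs.mul hsq

lemma set_stab_isSquare (hneg : IsSquare (-1 : K)) (g : GL (Fin 2) K)
    (h : g • base K = base K) : IsSquare (Matrix.det (g : Matrix (Fin 2) (Fin 2) K)) := by
  have m0 : g • P0 K ∈ base K := by
    rw [← h]; exact Set.smul_mem_smul_set (by simp [base])
  have m1 : g • P1 K ∈ base K := by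
    rw [← h]; exact Set.smul_mem_smul_set (by simp [base])
  have m2 : g • P2 K ∈ base K := by
    rw [← h]; exact Set.smul_mem_smul_set (by simp [base])
  simp only [base, Set.mem_insert_iff, Set.mem_singleton_iff] at m0 m1 m2
  have hone : IsSquare ((1:K) * 1 - 0 * 0) := by norm_num
  have hm1a : IsSquare ((-1:K) * 1 - 1 * 0) := by simpa using hneg
  have hm1b : IsSquare ((0:K) * 0 - 1 * 1) := by simpa using hneg
  have hm1c : IsSquare ((1:K) * (-1) - 0 * 1) := by simpa using hneg
  have hc1 : IsSquare ((0:K) * (-1) - (-1) * 1) := by norm_num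
  have hc2 : IsSquare ((1:K) * 0 - (-1) * 1) := by norm_num
  have inj01 : g • P0 K ≠ g • P1 K := fun e => P0_ne_P1 (MulAction.injective g e)
  have inj02 : g • P0 K ≠ g • P2 K := fun e => P0_ne_P2 (MulAction.injective g e)
  have inj12 : g • P1 K ≠ g • P2 K := fun e => P1_ne_P2 (MulAction.injective g e)
  rcases m0 with h0 | h0 | h0
  · rcases m1 with h1 | h1 | h1
    · exact absurd (h0.trans h1.symm) inj01
    · rcases m2 with h2 | h2 | h2
      · exact absurd (h0.trans h2.symm) inj02
      · exact absurd (h1.trans h2.symm) inj12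
      · exact smul_helper g (glmk 1 0 0 1 (by norm_num)) (by rw [glmk_det]; exact hone)
          (by rw [h0, P0]; exact (glmk_smul_P0 _ _ _ (by norm_num)).symm)
          (by rw [h1, P1]; exact (glmk_smul_P1 _ _ _ (by norm_num)).symm)
          (by rw [h2, P2]; exact (glmk_smul_P2 _ _ _ (by norm_num)).symm)
    · rcases m2 with h2 | h2 | h2
      · exact absurd (h0.trans h2.symm) inj02
      · exact smul_helper g (glmk (-1) 1 0 1 (by norm_num)) (by rw [glmk_det]; exact hm1a)
          (by rw [h0, P0]; exact (glmk_smul_P0 _ _ _ (by norm_num)).symm)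
          (by rw [h1, P2]; exact (glmk_smul_P1 _ _ _ (by norm_num)).symm)
          (by rw [h2, P1]; exact (glmk_smul_P2 _ _ _ (by norm_num)).symm)
      · exact absurd (h1.trans h2.symm) inj12
  · rcases m1 with h1 | h1 | h1
    · rcases m2 with h2 | h2 | h2
      · exact absurd (h1.trans h2.symm) inj12
      · exact absurd (h0.trans h2.symm) inj02
      · exact smul_helper g (glmk 0 1 1 0 (by norm_num)) (by rw [glmk_det]; exact hm1b)
          (by rw [h0, P1]; exact (glmk_smul_P0 _ _ _ (by norm_num)).symm)
          (by rw [h1, P0]; exact (glmk_smul_P1 _ _ _ (by norm_num)).symm)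
          (by rw [h2, P2]; exact (glmk_smul_P2 _ _ _ (by norm_num)).symm)
    · exact absurd (h0.trans h1.symm) inj01
    · rcases m2 with h2 | h2 | h2
      · exact smul_helper g (glmk 0 (-1) 1 (-1) (by norm_num)) (by rw [glmk_det]; exact hc1)
          (by rw [h0, P1]; exact (glmk_smul_P0 _ _ _ (by norm_num)).symm)
          (by rw [h1, P2]; exact (glmk_smul_P1 _ _ _ (by norm_num)).symm)
          (by rw [h2, P0]; exact (glmk_smul_P2 _ _ _ (by norm_num)).symm)
      · exact absurd (h0.trans h2.symm) inj02
      · exact absurd (h1.trans h2.symm) inj12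
  · rcases m1 with h1 | h1 | h1
    · rcases m2 with h2 | h2 | h2
      · exact absurd (h1.trans h2.symm) inj12
      · exact smul_helper g (glmk 1 (-1) 1 0 (by norm_num)) (by rw [glmk_det]; exact hc2)
          (by rw [h0, P2]; exact (glmk_smul_P0 _ _ _ (by norm_num)).symm)
          (by rw [h1, P0]; exact (glmk_smul_P1 _ _ _ (by norm_num)).symm)
          (by rw [h2, P1]; exact (glmk_smul_P2 _ _ _ (by norm_num)).symm)
      · exact absurd (h0.trans h2.symm) inj02
    · rcases m2 with h2 | h2 | h2
      · exact smul_helper g (glmk 1 0 1 (-1) (by norm_num)) (by rw [glmk_det]; exact hm1c)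
          (by rw [h0, P2]; exact (glmk_smul_P0 _ _ _ (by norm_num)).symm)
          (by rw [h1, P1]; exact (glmk_smul_P1 _ _ _ (by norm_num)).symm)
          (by rw [h2, P0]; exact (glmk_smul_P2 _ _ _ (by norm_num)).symm)
      · exact absurd (h1.trans h2.symm) inj12
      · exact absurd (h0.trans h2.symm) inj02
    · exact absurd (h0.trans h1.symm) inj01
end AuxLemmas3


noncomputable section AuxLemmas4
open scoped Pointwise
set_option synthInstance.maxHeartbeats 1000000
variable {K : Type*} [Field K]

lemma det_val_ne_zero (g : GL (Fin 2) K) :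
    Matrix.det (g : Matrix (Fin 2) (Fin 2) K) ≠ 0 :=
  ((Matrix.isUnit_iff_isUnit_det _).mp (Units.isUnit g)).ne_zero

lemma det_val_inv_mul (g : GL (Fin 2) K) :
    Matrix.det ((g⁻¹ : GL (Fin 2) K) : Matrix (Fin 2) (Fin 2) K) *
      Matrix.det (g : Matrix (Fin 2) (Fin 2) K) = 1 := by
  rw [← Matrix.det_mul, g.inv_mul, Matrix.det_one]

lemma sl_smul_eq_toGL_smul (h : Matrix.SpecialLinearGroup (Fin 2) K) (x : Proj K) :
    h • x = (Matrix.SpecialLinearGroup.toGL h) • x := rfl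

lemma sl_smul_set_eq_toGL_smul_set (h : Matrix.SpecialLinearGroup (Fin 2) K)
    (U : Set (Proj K)) : h • U = (Matrix.SpecialLinearGroup.toGL h) • U := rfl

lemma exists_sl_smul (g : GL (Fin 2) K)
    (hg : IsSquare (Matrix.det (g : Matrix (Fin 2) (Fin 2) K))) :
    ∃ h : Matrix.SpecialLinearGroup (Fin 2) K, ∀ x : Proj K, h • x = g • x := by
  obtain ⟨c, hc⟩ := hg
  have hc0 : c ≠ 0 := fun h0 => det_val_ne_zero g (by rw [hc, h0, mul_zero])
  have hdet : Matrix.det (c⁻¹ • (g : Matrix (Fin 2) (Fin 2) K)) = 1 := by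
    rw [Matrix.det_smul, hc]
    simp only [Fintype.card_fin]
    field_simp
  refine ⟨⟨c⁻¹ • (g : Matrix (Fin 2) (Fin 2) K), hdet⟩, fun x => ?_⟩
  induction x using Projectivization.ind with | h v hv =>
  show (Matrix.SpecialLinearGroup.toGL ⟨c⁻¹ • (g : Matrix (Fin 2) (Fin 2) K), hdet⟩) •
    Projectivization.mk K v hv = _
  rw [GL_smul_mk, GL_smul_mk, mk_eq_mk_iff_det]
  have key : ((Matrix.SpecialLinearGroup.toGL
        (⟨c⁻¹ • (g : Matrix (Fin 2) (Fin 2) K), hdet⟩ : Matrix.SpecialLinearGroup (Fin 2) K) :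
        GL (Fin 2) K) : Matrix (Fin 2) (Fin 2) K) = c⁻¹ • (g : Matrix (Fin 2) (Fin 2) K) := rfl
  rw [key, Matrix.smul_mulVec]
  simp only [Pi.smul_apply, smul_eq_mul]
  ring

lemma smul_mem_orbit_of_isSquare (g : GL (Fin 2) K)
    (hg : IsSquare (Matrix.det (g : Matrix (Fin 2) (Fin 2) K))) (U : Set (Proj K)) :
    g • U ∈ MulAction.orbit (Matrix.SpecialLinearGroup (Fin 2) K) U := by
  obtain ⟨h, hh⟩ := exists_sl_smul g hg
  refine MulAction.mem_orbit_iff.mpr ⟨h, ?_⟩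
  show h • U = g • U
  rw [← Set.image_smul, ← Set.image_smul]
  exact Set.image_congr fun x _ => hh x

end AuxLemmas4


noncomputable section AuxLemmas5
open scoped Pointwise
variable {K : Type*} [Field K]

lemma card_proj (K : Type*) [Field K] [Fintype K] :
    Nat.card (Proj K) = Fintype.card K + 1 := by
  classical
  have hbij : Function.Bijective (fun o : Option K => o.elim (P0 K)
      (fun x => Projectivization.mk K ![x,1] (vne0 (Or.inr one_ne_zero)))) := by
    constructor
    · rintro (_ | x) (_ | y) h
      · rfl
      · exfalso
        simp only [Option.elim] at h
        rw [P0, mk_eq_mk_iff_det] at h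
        simp at h
      · exfalso
        simp only [Option.elim] at h
        rw [P0, mk_eq_mk_iff_det] at h
        simp at h
      · simp only [Option.elim] at h
        rw [mk_eq_mk_iff_det] at h
        simp at h
        rw [sub_eq_zero] at h
        simpa using h
    · intro z
      induction z using Projectivization.ind with | h v hv =>
      by_cases h1 : v 1 = 0
      · refine ⟨none, ?_⟩
        simp only [Option.elim]
        rw [P0, mk_eq_mk_iff_det]
        simp [h1]
      · refine ⟨some (v 0 / v 1), ?_⟩
        simp only [Option.elim]
        rw [mk_eq_mk_iff_det]
        simp
        field_simp
        ring
  rw [← Nat.card_eq_of_bijective _ hbij, Nat.card_eq_fintype_card, Fintype.card_option]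

lemma ncard_three_subsets (X : Type*) [Fintype X] [DecidableEq X] :
    {U : Set X | U.ncard = 3}.ncard = (Fintype.card X).choose 3 := by
  classical
  have hinj : Function.Injective (fun U : Set X => U.toFinset) := fun U V h => by
    simpa [Set.toFinset_inj] using h
  have himg : (fun U : Set X => U.toFinset) '' {U | U.ncard = 3} =
      ↑(Finset.univ.powersetCard 3 : Finset (Finset X)) := by
    ext F
    simp only [Set.mem_image, Set.mem_setOf_eq, Finset.mem_coe,
      Finset.mem_powersetCard_univ]
    constructor
    · rintro ⟨U, hU, rfl⟩
      rw [← Set.ncard_eq_toFinset_card' U]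
      exact hU
    · intro hF
      exact ⟨↑F, by rw [Set.ncard_coe_finset]; exact hF, by simp⟩
  calc {U : Set X | U.ncard = 3}.ncard
      = ((fun U : Set X => U.toFinset) '' {U | U.ncard = 3}).ncard :=
        (Set.ncard_image_of_injective _ hinj).symm
    _ = (↑(Finset.univ.powersetCard 3 : Finset (Finset X)) : Set (Finset X)).ncard := by
        rw [himg]
    _ = (Finset.univ.powersetCard 3 : Finset (Finset X)).card := Set.ncard_coe_finset _
    _ = (Fintype.card X).choose 3 := by rw [Finset.card_powersetCard, Finset.card_univ]

lemma nonsq_mul_nonsq {F : Type*} [Field F] [Fintype F] [DecidableEq F] {a b : F} (ha : a ≠ 0)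
    (hb : b ≠ 0) (ha' : ¬IsSquare a) (hb' : ¬IsSquare b) : IsSquare (a * b) := by
  have h1 : quadraticChar F a = -1 := quadraticChar_neg_one_iff_not_isSquare.mpr ha'
  have h2 : quadraticChar F b = -1 := quadraticChar_neg_one_iff_not_isSquare.mpr hb'
  have h3 : quadraticChar F (a * b) = 1 := by rw [map_mul, h1, h2]; ring
  exact (quadraticChar_one_iff_isSquare (mul_ne_zero ha hb)).mp h3

lemma not_isSquare_inv {a : K} (ha : a ≠ 0) (h : ¬IsSquare a) : ¬IsSquare a⁻¹ := by
  rintro ⟨c, hc⟩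
  apply h
  refine ⟨c⁻¹, ?_⟩
  rw [← inv_inv a, hc, mul_inv]

end AuxLemmas5


noncomputable section AuxLemmas6
open scoped Pointwise
set_option synthInstance.maxHeartbeats 1000000
variable {K : Type*} [Field K]

lemma conj_sl (e : GL (Fin 2) K) (h : Matrix.SpecialLinearGroup (Fin 2) K) :
    ∃ h' : Matrix.SpecialLinearGroup (Fin 2) K,
      ∀ V : Set (Proj K), e • (h • V) = h' • (e • V) := by
  have hdet : Matrix.det ((e : Matrix (Fin 2) (Fin 2) K) * (h : Matrix (Fin 2) (Fin 2) K) *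
      ((e⁻¹ : GL (Fin 2) K) : Matrix (Fin 2) (Fin 2) K)) = 1 := by
    rw [Matrix.det_mul, Matrix.det_mul, h.prop]
    have h2 := det_val_inv_mul e
    linear_combination h2
  refine ⟨⟨_, hdet⟩, fun V => ?_⟩
  have he : Matrix.SpecialLinearGroup.toGL (⟨_, hdet⟩ : Matrix.SpecialLinearGroup (Fin 2) K) =
      e * Matrix.SpecialLinearGroup.toGL h * e⁻¹ := Units.ext rfl
  show e • (Matrix.SpecialLinearGroup.toGL h • V) =
    Matrix.SpecialLinearGroup.toGL ⟨_, hdet⟩ • (e • V)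
  rw [he,
    ← mul_smul, ← mul_smul]
  congr 1
  group
end AuxLemmas6


set_option synthInstance.maxHeartbeats 2000000
set_option maxHeartbeats 2000000

open scoped Pointwise in
/-- For an odd prime power `q = p^m` with `q ≡ 1 (mod 4)`, the action of
`SL(2, F_q)` on the 3-element subsets of the projective line has exactly two orbits, each of
size `(1/2) ⬝ binom(q+1, 3)`. -/
theorem sl2_two_orbits_on_three_subsets (p m : ℕ) [Fact p.Prime] (hp : Odd p) (hm : 1 ≤ m)
    (hq : p ^ m % 4 = 1) :
    ∃ S T : Set (Proj (GaloisField p m)),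
      S.ncard = 3 ∧ T.ncard = 3 ∧
      T ∉ MulAction.orbit (Matrix.SpecialLinearGroup (Fin 2) (GaloisField p m)) S ∧
      (∀ U : Set (Proj (GaloisField p m)), U.ncard = 3 →
        U ∈ MulAction.orbit (Matrix.SpecialLinearGroup (Fin 2) (GaloisField p m)) S ∨
        U ∈ MulAction.orbit (Matrix.SpecialLinearGroup (Fin 2) (GaloisField p m)) T) ∧
      2 * (MulAction.orbit (Matrix.SpecialLinearGroup (Fin 2) (GaloisField p m)) S).ncard
          = (p ^ m + 1).choose 3 ∧
      2 * (MulAction.orbit (Matrix.SpecialLinearGroup (Fin 2) (GaloisField p m)) T).ncard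
          = (p ^ m + 1).choose 3 := by
  classical
  haveI : Fintype (GaloisField p m) := Fintype.ofFinite _
  haveI : Finite (Proj (GaloisField p m)) := Quotient.finite _
  haveI : Fintype (Proj (GaloisField p m)) := Fintype.ofFinite _
  have hm0 : m ≠ 0 := by omega
  have hcard : Fintype.card (GaloisField p m) = p ^ m := by
    rw [← Nat.card_eq_fintype_card, GaloisField.card p m hm0]
  have hneg : IsSquare (-1 : GaloisField p m) := by
    rw [FiniteField.isSquare_neg_one_iff, hcard]
    omega
  have hchar : ringChar (GaloisField p m) ≠ 2 := by
    have hrc : ringChar (GaloisField p m) = p := by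
      rw [ringChar.eq_iff]; infer_instance
    obtain ⟨k, hk⟩ := hp
    omega
  obtain ⟨ε, hε⟩ := FiniteField.exists_nonsquare hchar
  have hε0 : ε ≠ 0 := fun h => hε ⟨0, by rw [h]; ring⟩
  have hdne : ε * 1 - 0 * 0 ≠ 0 := by simpa using hε0
  set d : GL (Fin 2) (GaloisField p m) := glmk ε 0 0 1 hdne with hd
  have hdetd : Matrix.det (d : Matrix (Fin 2) (Fin 2) (GaloisField p m)) = ε := by
    rw [hd, glmk_det]; ring
  set S : Set (Proj (GaloisField p m)) := base (GaloisField p m) with hSdef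
  set T : Set (Proj (GaloisField p m)) := d • S with hTdef
  have hS3 : S.ncard = 3 :=
    Set.ncard_eq_three.mpr ⟨_, _, _, P0_ne_P1, P0_ne_P2, P1_ne_P2, rfl⟩
  have hT3 : T.ncard = 3 := by rw [hTdef, Set.ncard_smul_set, hS3]
  have hTS : T ∉ MulAction.orbit (Matrix.SpecialLinearGroup (Fin 2) (GaloisField p m)) S := by
    intro hmem
    obtain ⟨h, hh⟩ := MulAction.mem_orbit_iff.mp hmem
    have hstab : ((Matrix.SpecialLinearGroup.toGL h)⁻¹ * d) • base (GaloisField p m)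
        = base (GaloisField p m) := by
      rw [mul_smul, ← hSdef, ← hTdef, ← hh, sl_smul_set_eq_toGL_smul_set, inv_smul_smul]
    have hsq := set_stab_isSquare hneg _ hstab
    have hdet1 : Matrix.det ((Matrix.SpecialLinearGroup.toGL h : GL (Fin 2) (GaloisField p m))
        : Matrix (Fin 2) (Fin 2) (GaloisField p m)) = 1 := h.prop
    have hdetinv : Matrix.det (((Matrix.SpecialLinearGroup.toGL h)⁻¹
        : GL (Fin 2) (GaloisField p m)) : Matrix (Fin 2) (Fin 2) (GaloisField p m)) = 1 := by
      have h2 := det_val_inv_mul (Matrix.SpecialLinearGroup.toGL h)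
      rw [hdet1, mul_one] at h2
      exact h2
    rw [Units.val_mul, Matrix.det_mul, hdetinv, hdetd, one_mul] at hsq
    exact hε hsq
  have hcover : ∀ U : Set (Proj (GaloisField p m)), U.ncard = 3 →
      U ∈ MulAction.orbit (Matrix.SpecialLinearGroup (Fin 2) (GaloisField p m)) S ∨
      U ∈ MulAction.orbit (Matrix.SpecialLinearGroup (Fin 2) (GaloisField p m)) T := by
    intro U hU
    obtain ⟨x, y, z, hxy, hxz, hyz, rfl⟩ := Set.ncard_eq_three.mp hU
    obtain ⟨g, hg0, hg1, hg2⟩ := exists_gl_map x y z hxy hxz hyz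
    have hgbase : g • S = {x, y, z} := by
      rw [hSdef, base, Set.smul_set_insert, Set.smul_set_insert, Set.smul_set_singleton,
        hg0, hg1, hg2]
    by_cases hsq : IsSquare (Matrix.det (g : Matrix (Fin 2) (Fin 2) (GaloisField p m)))
    · left
      rw [← hgbase]
      exact smul_mem_orbit_of_isSquare g hsq S
    · right
      have hkey : (g * d⁻¹) • T = {x, y, z} := by
        rw [hTdef, ← mul_smul, inv_mul_cancel_right, hgbase]
      rw [← hkey]
      apply smul_mem_orbit_of_isSquare
      have hdinv : Matrix.det ((d⁻¹ : GL (Fin 2) (GaloisField p m))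
          : Matrix (Fin 2) (Fin 2) (GaloisField p m)) = ε⁻¹ := by
        have h2 := det_val_inv_mul d
        rw [hdetd] at h2
        exact eq_inv_of_mul_eq_one_left h2
      rw [Units.val_mul, Matrix.det_mul, hdinv]
      exact nonsq_mul_nonsq (det_val_ne_zero g) (inv_ne_zero hε0) hsq (not_isSquare_inv hε0 hε)
  have horbT : MulAction.orbit (Matrix.SpecialLinearGroup (Fin 2) (GaloisField p m)) T =
      (fun V : Set (Proj (GaloisField p m)) => d • V) ''
        MulAction.orbit (Matrix.SpecialLinearGroup (Fin 2) (GaloisField p m)) S := by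
    ext W
    simp only [Set.mem_image]
    constructor
    · intro hW
      obtain ⟨h, hh⟩ := MulAction.mem_orbit_iff.mp hW
      obtain ⟨h', hh'⟩ := conj_sl d⁻¹ h
      refine ⟨h' • S, MulAction.mem_orbit_iff.mpr ⟨h', rfl⟩, ?_⟩
      have hcc := hh' T
      rw [hTdef, inv_smul_smul] at hcc
      rw [← hcc, smul_inv_smul, hh]
    · rintro ⟨V, hV, rfl⟩
      obtain ⟨h, hh⟩ := MulAction.mem_orbit_iff.mp hV
      obtain ⟨h', hh'⟩ := conj_sl d h
      refine MulAction.mem_orbit_iff.mpr ⟨h', ?_⟩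
      rw [hTdef, ← hh' S, hh]
  have hcardeq :
      (MulAction.orbit (Matrix.SpecialLinearGroup (Fin 2) (GaloisField p m)) T).ncard
      = (MulAction.orbit (Matrix.SpecialLinearGroup (Fin 2) (GaloisField p m)) S).ncard := by
    rw [horbT]
    exact Set.ncard_image_of_injective _
      (fun V W hVW => by
        simpa only [inv_smul_smul] using congrArg (fun X : Set (Proj (GaloisField p m)) =>
          d⁻¹ • X) hVW)
  have hdisj : Disjoint
      (MulAction.orbit (Matrix.SpecialLinearGroup (Fin 2) (GaloisField p m)) S)
      (MulAction.orbit (Matrix.SpecialLinearGroup (Fin 2) (GaloisField p m)) T) := by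
    rw [Set.disjoint_left]
    intro W hWS hWT
    obtain ⟨h1, hh1⟩ := MulAction.mem_orbit_iff.mp hWS
    obtain ⟨h2, hh2⟩ := MulAction.mem_orbit_iff.mp hWT
    exact hTS (MulAction.mem_orbit_iff.mpr
      ⟨h2⁻¹ * h1, by rw [mul_smul, hh1, ← hh2, inv_smul_smul]⟩)
  have hunion :
      MulAction.orbit (Matrix.SpecialLinearGroup (Fin 2) (GaloisField p m)) S ∪
      MulAction.orbit (Matrix.SpecialLinearGroup (Fin 2) (GaloisField p m)) T
      = {U : Set (Proj (GaloisField p m)) | U.ncard = 3} := by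
    ext W
    simp only [Set.mem_union, Set.mem_setOf_eq]
    constructor
    · rintro (hW | hW)
      · obtain ⟨h, hh⟩ := MulAction.mem_orbit_iff.mp hW
        rw [← hh, Set.ncard_smul_set, hS3]
      · obtain ⟨h, hh⟩ := MulAction.mem_orbit_iff.mp hW
        rw [← hh, Set.ncard_smul_set, hT3]
    · exact hcover W
  have hcount : {U : Set (Proj (GaloisField p m)) | U.ncard = 3}.ncard
      = (p ^ m + 1).choose 3 := by
    rw [ncard_three_subsets, ← Nat.card_eq_fintype_card, card_proj, hcard]
  have hsum := Set.ncard_union_eq hdisj (Set.toFinite _) (Set.toFinite _)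
  rw [hunion, hcount] at hsum
  refine ⟨S, T, hS3, hT3, hTS, hcover, ?_, ?_⟩ <;> omega
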